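/- Fix d ∈ [−1,1) and β > 0. The Lyapunov function V_l is continuously differentiable on ℝ² with partial derivatives ∂V_l/∂z₁(z₁,z₂) = ⌊z₁⌉^{1/(1−d)} − z₂ and ∂V_l/∂z₂(z₁,z₂) = −z₁ + (1+β)·⌊z₂⌉^{1−d}. Consequently, for any k̃₁, k̃₂ > 0 and the zero-input error vector field f₀(z₁,z₂) := (−k̃₁·(⌊z₁⌉^{1/(1−d)} − z₂), −k̃₂·⌊z₁⌉^{(1+d)/(1−d)}), one has for all (z₁,z₂) ∈ ℝ²: ⟨∇V_l(z₁,z₂), f₀(z₁,z₂)⟩ = −k̃₁·μ(z₁,z₂) + k̃₂·η(z₁,z₂). -/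

import Mathlib

/-- Sign-preserving power `⌊x⌉^p = sign(x)·|x|^p`. -/
noncomputable def spow (x p : ℝ) : ℝ := Real.sign x * |x| ^ p

/-- The Lyapunov function `V_l` of the second-order homogeneous differentiator. -/
noncomputable def Vl (d β z1 z2 : ℝ) : ℝ :=
  ((1 - d) / (2 - d)) * |z1| ^ ((2 - d) / (1 - d)) - z1 * z2
    + ((1 + β) / (2 - d)) * |z2| ^ (2 - d)

/-- `μ(z) = |⌊z₁⌉^{1/(1-d)} - z₂|²`. -/
noncomputable def muF (d z1 z2 : ℝ) : ℝ := |spow z1 (1/(1-d)) - z2| ^ (2:ℝ)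

/-- `η(z) = (1+β)(z₁ - ⌊z₂⌉^{1-d})⌊z₁⌉^{(1+d)/(1-d)} - β|z₁|^{2/(1-d)}`. -/
noncomputable def etaF (d β z1 z2 : ℝ) : ℝ :=
  (1 + β) * (z1 - spow z2 (1 - d)) * spow z1 ((1+d)/(1-d)) - β * |z1| ^ (2/(1-d))


lemma spow_zero (p : ℝ) : spow 0 p = 0 := by simp [spow]

lemma spow_of_pos {x : ℝ} (hx : 0 < x) (p : ℝ) : spow x p = x ^ p := by
  rw [spow, Real.sign_of_pos hx, abs_of_pos hx, one_mul]

lemma spow_of_neg {x : ℝ} (hx : x < 0) (p : ℝ) : spow x p = -((-x) ^ p) := by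
  rw [spow, Real.sign_of_neg hx, abs_of_neg hx, neg_one_mul]

lemma my_sign_mul_self (x : ℝ) : Real.sign x * x = |x| := by
  rcases lt_trichotomy x 0 with h | h | h
  · rw [Real.sign_of_neg h, abs_of_neg h]; ring
  · simp [h]
  · rw [Real.sign_of_pos h, abs_of_pos h]; ring

lemma my_continuous_spow {q : ℝ} (hq : 0 < q) : Continuous fun x => spow x q := by
  rw [continuous_iff_continuousAt]
  intro x
  rcases lt_trichotomy x 0 with h | h | h
  · have h1 : ContinuousAt (fun y : ℝ => -((-y) ^ q)) x :=
      (((Real.continuousAt_rpow_const (-x) q (Or.inl (by simpa using h.ne))).comp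
        (continuous_neg.continuousAt))).neg
    refine h1.congr ?_
    filter_upwards [Iio_mem_nhds h] with y hy
    exact (spow_of_neg hy q).symm
  · subst h
    have ht : Filter.Tendsto (fun y : ℝ => |y| ^ q) (nhds 0) (nhds 0) := by
      have h1 : ContinuousAt (fun x : ℝ => x ^ q) (|(0:ℝ)|) := by
        rw [abs_zero]; exact Real.continuousAt_rpow_const 0 q (Or.inr hq.le)
      have hc : ContinuousAt (fun y : ℝ => |y| ^ q) 0 := h1.comp continuous_abs.continuousAt
      simpa [ContinuousAt, abs_zero, Real.zero_rpow hq.ne'] using hc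
    have : Filter.Tendsto (fun y : ℝ => spow y q) (nhds 0) (nhds 0) := by
      refine squeeze_zero_norm' ?_ ht
      filter_upwards with y
      have hs : |Real.sign y| ≤ 1 := by
        rcases lt_trichotomy y 0 with h | h | h <;>
          simp [Real.sign_of_neg, Real.sign_of_pos, h, le_refl]
      calc ‖spow y q‖ = |Real.sign y| * |(|y| ^ q)| := by rw [spow]; exact abs_mul _ _
        _ ≤ 1 * |(|y| ^ q)| := by gcongr
        _ = |y| ^ q := by rw [one_mul, abs_of_nonneg (Real.rpow_nonneg (abs_nonneg y) q)]
    simpa [ContinuousAt, spow_zero] using this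
  · have h1 : ContinuousAt (fun y : ℝ => y ^ q) x :=
      Real.continuousAt_rpow_const x q (Or.inl h.ne')
    refine h1.congr ?_
    filter_upwards [Ioi_mem_nhds h] with y hy
    exact (spow_of_pos hy q).symm

lemma my_hasDerivAt_abs_rpow {p : ℝ} (hp : 1 < p) (x : ℝ) :
    HasDerivAt (fun y => |y| ^ p) (p * spow x (p - 1)) x := by
  rcases lt_trichotomy x 0 with h | h | h
  · have h1 : HasDerivAt (fun y : ℝ => (-y) ^ p) (p * (-x) ^ (p - 1) * (-1)) x :=
      (Real.hasDerivAt_rpow_const (x := -x) (p := p)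
        (Or.inl (by simpa using h.ne))).comp x (hasDerivAt_neg x)
    have h2 : HasDerivAt (fun y => |y| ^ p) (p * (-x) ^ (p - 1) * (-1)) x := by
      refine h1.congr_of_eventuallyEq ?_
      filter_upwards [Iio_mem_nhds h] with y hy
      rw [abs_of_neg hy]
    convert h2 using 1
    rw [spow_of_neg h]; ring
  · subst h
    rw [hasDerivAt_iff_tendsto_slope]
    rw [spow_zero, mul_zero]
    refine squeeze_zero_norm' (a := fun y : ℝ => |y| ^ (p - 1)) ?_ ?_
    · filter_upwards [self_mem_nhdsWithin] with y (hy : y ≠ 0)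
      have : ‖slope (fun y => |y| ^ p) 0 y‖ = |y| ^ (p - 1) := by
        rw [slope_def_field]
        have h0 : |(0:ℝ)| ^ p = 0 := by rw [abs_zero, Real.zero_rpow (by linarith)]
        rw [h0, sub_zero, sub_zero, norm_div, Real.norm_eq_abs, Real.norm_eq_abs,
          abs_of_nonneg (Real.rpow_nonneg (abs_nonneg y) p),
          Real.rpow_sub (abs_pos.mpr hy), Real.rpow_one]
      exact le_of_eq this
    · have ht : Filter.Tendsto (fun y : ℝ => |y| ^ (p - 1)) (nhds 0) (nhds 0) := by
        have h1 : ContinuousAt (fun x : ℝ => x ^ (p - 1)) (|(0:ℝ)|) := by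
          rw [abs_zero]; exact Real.continuousAt_rpow_const 0 (p - 1) (Or.inr (by linarith))
        have hc : ContinuousAt (fun y : ℝ => |y| ^ (p - 1)) 0 := h1.comp continuous_abs.continuousAt
        simpa [ContinuousAt, abs_zero, Real.zero_rpow (show p - 1 ≠ 0 by linarith)] using hc
      exact ht.mono_left nhdsWithin_le_nhds
  · have h1 : HasDerivAt (fun y : ℝ => y ^ p) (p * x ^ (p - 1)) x :=
      Real.hasDerivAt_rpow_const (Or.inl h.ne')
    have h2 : HasDerivAt (fun y => |y| ^ p) (p * x ^ (p - 1)) x := by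
      refine h1.congr_of_eventuallyEq ?_
      filter_upwards [Ioi_mem_nhds h] with y hy
      rw [abs_of_pos hy]
    convert h2 using 2
    exact spow_of_pos h _

lemma my_contDiff_abs_rpow {p : ℝ} (hp : 1 < p) : ContDiff ℝ 1 (fun y : ℝ => |y| ^ p) := by
  rw [contDiff_one_iff_deriv]
  constructor
  · exact fun x => (my_hasDerivAt_abs_rpow hp x).differentiableAt
  · have : (deriv fun y : ℝ => |y| ^ p) = fun x => p * spow x (p - 1) := by
      funext x; exact (my_hasDerivAt_abs_rpow hp x).deriv
    rw [this]
    exact continuous_const.mul (my_continuous_spow (by linarith))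

/-- `V_l` is continuously differentiable with the stated partial derivatives, and the
derivative along the zero-input error vector field equals `-k̃₁ μ + k̃₂ η`. -/
theorem stmt6 (d β : ℝ) (hd : d ∈ Set.Ico (-1:ℝ) 1) (hβ : 0 < β)
    (k1 k2 : ℝ) (hk1 : 0 < k1) (hk2 : 0 < k2) :
    ContDiff ℝ 1 (fun z : ℝ × ℝ => Vl d β z.1 z.2) ∧
    (∀ z1 z2 w1 w2 : ℝ,
      fderiv ℝ (fun z : ℝ × ℝ => Vl d β z.1 z.2) (z1, z2) (w1, w2)
        = (spow z1 (1/(1-d)) - z2) * w1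
            + (-z1 + (1 + β) * spow z2 (1 - d)) * w2) ∧
    (∀ z1 z2 : ℝ,
      (spow z1 (1/(1-d)) - z2) * (-k1 * (spow z1 (1/(1-d)) - z2))
        + (-z1 + (1 + β) * spow z2 (1 - d)) * (-k2 * spow z1 ((1+d)/(1-d)))
      = -k1 * muF d z1 z2 + k2 * etaF d β z1 z2) := by
  obtain ⟨hd1, hd2⟩ := hd
  have h1d : (0:ℝ) < 1 - d := by linarith
  have h2d : (0:ℝ) < 2 - d := by linarith
  have ha : 1 < (2 - d) / (1 - d) := (one_lt_div h1d).mpr (by linarith)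
  have hb : 1 < 2 - d := by linarith
  refine ⟨?_, ?_, ?_⟩
  · have g1 := my_contDiff_abs_rpow ha
    have g2 := my_contDiff_abs_rpow hb
    exact ((contDiff_const.mul (g1.comp contDiff_fst)).sub
      (contDiff_fst.mul contDiff_snd)).add (contDiff_const.mul (g2.comp contDiff_snd))
  · intro z1 z2 w1 w2
    set fstL := ContinuousLinearMap.fst ℝ ℝ ℝ
    set sndL := ContinuousLinearMap.snd ℝ ℝ ℝ
    have h1 : HasFDerivAt (fun z : ℝ × ℝ => |z.1| ^ ((2 - d) / (1 - d)))
        ((((2 - d) / (1 - d)) * spow z1 ((2 - d) / (1 - d) - 1)) • fstL) (z1, z2) :=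
      (HasDerivAt.comp_hasFDerivAt (z1, z2) (my_hasDerivAt_abs_rpow ha z1)
        (hasFDerivAt_fst (𝕜 := ℝ) (E := ℝ) (F := ℝ) (p := (z1, z2))) :)
    have h2 : HasFDerivAt (fun z : ℝ × ℝ => |z.2| ^ (2 - d))
        (((2 - d) * spow z2 (2 - d - 1)) • sndL) (z1, z2) :=
      (HasDerivAt.comp_hasFDerivAt (z1, z2) (my_hasDerivAt_abs_rpow hb z2)
        (hasFDerivAt_snd (𝕜 := ℝ) (E := ℝ) (F := ℝ) (p := (z1, z2))) :)
    have hmul : HasFDerivAt (fun z : ℝ × ℝ => z.1 * z.2) (z1 • sndL + z2 • fstL) (z1, z2) :=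
      by exact HasFDerivAt.mul (𝔸' := ℝ) (hasFDerivAt_fst (𝕜 := ℝ) (p := ((z1, z2) : ℝ × ℝ)))
          (hasFDerivAt_snd (𝕜 := ℝ) (p := ((z1, z2) : ℝ × ℝ)))
    have hV : HasFDerivAt (fun z : ℝ × ℝ => Vl d β z.1 z.2)
        (((1 - d) / (2 - d)) • ((((2 - d) / (1 - d)) * spow z1 ((2 - d) / (1 - d) - 1)) • fstL)
          - (z1 • sndL + z2 • fstL)
          + ((1 + β) / (2 - d)) • (((2 - d) * spow z2 (2 - d - 1)) • sndL)) (z1, z2) :=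
      ((h1.const_mul ((1 - d) / (2 - d))).sub hmul).add (h2.const_mul ((1 + β) / (2 - d)))
    rw [hV.fderiv]
    simp only [fstL, sndL, ContinuousLinearMap.add_apply, ContinuousLinearMap.sub_apply,
      ContinuousLinearMap.smul_apply, ContinuousLinearMap.coe_fst', ContinuousLinearMap.coe_snd',
      smul_eq_mul]
    rw [show (2 - d) / (1 - d) - 1 = 1 / (1 - d) by field_simp; ring,
      show (2 : ℝ) - d - 1 = 1 - d by ring]
    field_simp
    ring
  · intro z1 z2
    have hq2 : (2 / (1 - d) : ℝ) ≠ 0 := by positivity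
    have hP : z1 * spow z1 ((1 + d) / (1 - d)) = |z1| ^ (2 / (1 - d)) := by
      rcases eq_or_ne z1 0 with h | h
      · simp [h, spow_zero, Real.zero_rpow hq2]
      · have key : |z1| * |z1| ^ ((1 + d) / (1 - d)) = |z1| ^ (2 / (1 - d)) := by
          rw [show (2 / (1 - d) : ℝ) = 1 + (1 + d) / (1 - d) by field_simp; ring,
            Real.rpow_add (abs_pos.mpr h), Real.rpow_one]
        rw [spow, ← mul_assoc, mul_comm z1 (Real.sign z1), my_sign_mul_self, key]
    have habs : ∀ t : ℝ, |t| ^ (2:ℝ) = t ^ 2 := fun t => by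
      rw [show (2:ℝ) = ((2:ℕ):ℝ) by norm_num, Real.rpow_natCast, sq_abs]
    simp only [muF, etaF, habs, ← hP]
    ring
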